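/- Consider the Markov chain on {0,1,2,...} with P(0,0)=1 and, for i ≥ 1, P(i,0)=β_i = 1/(i+1), P(i,i+1)=1−β_i, with one-stage costs c(0)=0 and c(i)=i+1 for i ≥ 1. Then for every initial state i ≥ 1, the limit superior expected average cost J(i) := limsup_{n→∞} (1/n) Σ_{k=0}^{n−1} E_i[c(x_k)] equals i. -/

import Mathlib

open MeasureTheory Filter
open scoped ENNReal

/-- Markov chain on ℕ with `0` absorbing, and from `j ≥ 1`: transition to `0` w.p.
`1/(j+1)`, to `j+1` w.p. `j/(j+1)`; one-stage cost `c 0 = 0`, `c j = j+1` for `j ≥ 1`.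
Then for every initial state `i ≥ 1`, the limsup expected average cost equals `i`. -/
theorem stmt_5 {Ω : Type*} [MeasurableSpace Ω] (P : Measure Ω) [IsProbabilityMeasure P]
    (x : ℕ → Ω → ℕ) (hmeas : ∀ n, Measurable (x n))
    (i : ℕ) (hi : 1 ≤ i) (hx0 : ∀ ω, x 0 ω = i)
    (habs : ∀ n, ∀ᵐ ω ∂P, x n ω = 0 → x (n+1) ω = 0)
    (htrans0 : ∀ n j, 1 ≤ j →
      P ({ω | x (n+1) ω = 0} ∩ {ω | x n ω = j})
        = ENNReal.ofReal (1 / ((j : ℝ) + 1)) * P {ω | x n ω = j})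
    (htrans1 : ∀ n j, 1 ≤ j →
      P ({ω | x (n+1) ω = j+1} ∩ {ω | x n ω = j})
        = ENNReal.ofReal ((j : ℝ) / ((j : ℝ) + 1)) * P {ω | x n ω = j}) :
    Filter.atTop.limsup
      (fun n : ℕ =>
        (∑ k ∈ Finset.range n,
          ∫⁻ ω, (if x k ω = 0 then 0 else (x k ω : ℝ≥0∞) + 1) ∂P) / (n : ℝ≥0∞))
      = (i : ℝ≥0∞) := by
  have hms : ∀ n j, MeasurableSet {ω | x n ω = j} :=
    fun n j => hmeas n (measurableSet_singleton j)
  have hipos : (0:ℝ) < i := by exact_mod_cast hi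
  have hik : ∀ k : ℕ, (0:ℝ) < (i:ℝ) + k := fun k => by positivity
  -- key induction
  have key : ∀ k, (∀ᵐ ω ∂P, x k ω = 0 ∨ x k ω = i + k) ∧
      P {ω | x k ω = i + k} = ENNReal.ofReal ((i:ℝ) / ((i:ℝ) + k)) := by
    intro k
    induction k with
    | zero =>
      refine ⟨Filter.Eventually.of_forall fun ω => Or.inr (by simp [hx0 ω]), ?_⟩
      have h1 : {ω | x 0 ω = i + 0} = Set.univ := by ext ω; simp [hx0 ω]
      rw [h1, measure_univ]
      rw [show ((i:ℝ) + ((0:ℕ):ℝ)) = (i:ℝ) by push_cast; ring, div_self hipos.ne']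
      simp
    | succ k ih =>
      obtain ⟨ihae, ihP⟩ := ih
      have hjk : 1 ≤ i + k := le_trans hi (Nat.le_add_right i k)
      have hjk1 : i + (k+1) ≠ 0 := by omega
      set C := {ω | x k ω = i + k} with hC
      set A := {ω | x (k+1) ω = 0} with hA
      set B := {ω | x (k+1) ω = i + (k+1)} with hB
      have h0 := htrans0 k (i+k) hjk
      have h1 := htrans1 k (i+k) hjk
      have hBeq : {ω | x (k+1) ω = (i+k)+1} = B := by
        ext ω; simp only [hB, Set.mem_setOf_eq]; omega
      rw [hBeq] at h1
      -- the null part of C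
      have hsum : P (A ∩ C) + P (B ∩ C) = P C := by
        rw [h0, h1, ← add_mul, ← ENNReal.ofReal_add (by positivity) (by positivity)]
        have : 1 / (((i+k : ℕ):ℝ) + 1) + ((i+k : ℕ):ℝ) / (((i+k : ℕ):ℝ) + 1) = 1 := by
          have : (0:ℝ) < ((i+k : ℕ):ℝ) + 1 := by positivity
          field_simp
          ring
        rw [this, ENNReal.ofReal_one, one_mul]
      have hdiff : P (C \ (A ∪ B)) = 0 := by
        have hmAB : MeasurableSet (A ∪ B) := (hms (k+1) 0).union (hms (k+1) (i+(k+1)))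
        have hsplit : P (C ∩ (A ∪ B)) + P (C \ (A ∪ B)) = P C :=
          measure_inter_add_diff C hmAB
        have hCint : P (C ∩ (A ∪ B)) = P (A ∩ C) + P (B ∩ C) := by
          have hset : C ∩ (A ∪ B) = (A ∩ C) ∪ (B ∩ C) := by
            ext ω; simp only [Set.mem_inter_iff, Set.mem_union]; tauto
          rw [hset]
          refine measure_union ?_ ((hms (k+1) (i+(k+1))).inter (hms k (i+k)))
          refine Set.disjoint_left.2 fun ω hωA hωB => ?_
          have h1 : x (k+1) ω = 0 := hωA.1
          have h2 : x (k+1) ω = i + (k+1) := hωB.1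
          omega
        rw [hCint, hsum] at hsplit
        have hfin : P C ≠ ⊤ := measure_ne_top P C
        nth_rewrite 2 [show P C = P C + 0 by simp] at hsplit
        exact ((ENNReal.add_right_inj hfin).1 hsplit)
      have hnmem : ∀ᵐ ω ∂P, ω ∉ C \ (A ∪ B) :=
        measure_eq_zero_iff_ae_notMem.1 hdiff
      constructor
      · filter_upwards [ihae, habs k, hnmem] with ω hor hz hnm
        rcases hor with h | h
        · exact Or.inl (hz h)
        · have hωC : ω ∈ C := h
          have : ω ∈ A ∪ B := by
            by_contra hc
            exact hnm ⟨hωC, hc⟩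
          rcases this with hA' | hB'
          · exact Or.inl hA'
          · exact Or.inr hB'
      · have hBC : P B = P (B ∩ C) := by
          refine measure_congr ?_
          rw [Filter.eventuallyEq_set]
          filter_upwards [ihae, habs k] with ω hor hz
          constructor
          · intro hωB
            rcases hor with h | h
            · exfalso
              have := hz h
              have h2 : x (k+1) ω = i + (k+1) := hωB
              omega
            · exact ⟨hωB, h⟩
          · exact fun h => h.1
        rw [hBC, h1, ihP, ← ENNReal.ofReal_mul (by positivity)]
        congr 1
        have hk0 : ((i+k : ℕ):ℝ) = (i:ℝ) + k := by push_cast; ring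
        rw [hk0]
        have h2 : (0:ℝ) < (i:ℝ) + k := hik k
        have h3 : (0:ℝ) < (i:ℝ) + k + 1 := by positivity
        rw [show ((i:ℝ) + ((k+1:ℕ):ℝ)) = (i:ℝ) + k + 1 by push_cast; ring]
        field_simp
  -- value of each integral
  have hint : ∀ k, (∫⁻ ω, (if x k ω = 0 then 0 else (x k ω : ℝ≥0∞) + 1) ∂P)
      = ENNReal.ofReal (((i:ℝ) + k + 1) * ((i:ℝ) / ((i:ℝ) + k))) := by
    intro k
    obtain ⟨hae, hP⟩ := key k
    have hjk : 1 ≤ i + k := le_trans hi (Nat.le_add_right i k)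
    have hcongr : (fun ω => (if x k ω = 0 then 0 else (x k ω : ℝ≥0∞) + 1))
        =ᵐ[P] fun ω => Set.indicator {ω | x k ω = i + k}
          (fun _ => ((i + k : ℕ) : ℝ≥0∞) + 1) ω := by
      filter_upwards [hae] with ω h
      rcases h with h | h
      · have : ω ∉ {ω | x k ω = i + k} := by
          simp only [Set.mem_setOf_eq, h]; omega
        simp [h, Set.indicator_of_notMem this]
      · have hne : x k ω ≠ 0 := by omega
        have : ω ∈ {ω | x k ω = i + k} := h
        rw [if_neg hne, Set.indicator_of_mem this, h]
    rw [lintegral_congr_ae hcongr, lintegral_indicator_const (hms k (i+k)), hP]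
    have hc : ((i + k : ℕ) : ℝ≥0∞) + 1 = ENNReal.ofReal ((i:ℝ) + k + 1) := by
      rw [show ((i:ℝ) + k + 1) = ((i + k + 1 : ℕ) : ℝ) by push_cast; ring,
        ENNReal.ofReal_natCast]
      push_cast
      ring
    rw [hc, ← ENNReal.ofReal_mul (by positivity)]
  -- real-valued sums
  set b : ℕ → ℝ := fun k => ((i:ℝ) + k + 1) * ((i:ℝ) / ((i:ℝ) + k)) with hb
  have hbnn : ∀ k, 0 ≤ b k := fun k => by
    have := hik k; positivity
  have hbt : Filter.Tendsto b atTop (nhds (i:ℝ)) := by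
    have hbeq : b = fun k : ℕ => (i:ℝ) + (i:ℝ) * ((i:ℝ) + k)⁻¹ := by
      funext k
      have := (hik k).ne'
      simp only [hb]
      field_simp
    rw [hbeq]
    have h1 : Filter.Tendsto (fun k : ℕ => (i:ℝ) + k) atTop atTop :=
      tendsto_atTop_add_const_left _ _ tendsto_natCast_atTop_atTop
    have h2 : Filter.Tendsto (fun k : ℕ => ((i:ℝ) + k)⁻¹) atTop (nhds 0) :=
      h1.inv_tendsto_atTop
    have h3 := h2.const_mul (i:ℝ)
    have := (tendsto_const_nhds (x := (i:ℝ)) (f := atTop)).add h3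
    simpa using this
  have hces : Filter.Tendsto (fun n : ℕ => (n:ℝ)⁻¹ * ∑ k ∈ Finset.range n, b k)
      atTop (nhds (i:ℝ)) := hbt.cesaro
  -- rewrite the ENNReal sequence
  have heq : ∀ n : ℕ, 1 ≤ n →
      (∑ k ∈ Finset.range n,
          ∫⁻ ω, (if x k ω = 0 then 0 else (x k ω : ℝ≥0∞) + 1) ∂P) / (n : ℝ≥0∞)
        = ENNReal.ofReal ((n:ℝ)⁻¹ * ∑ k ∈ Finset.range n, b k) := by
    intro n hn
    have hsum : (∑ k ∈ Finset.range n,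
        ∫⁻ ω, (if x k ω = 0 then 0 else (x k ω : ℝ≥0∞) + 1) ∂P)
        = ENNReal.ofReal (∑ k ∈ Finset.range n, b k) := by
      rw [ENNReal.ofReal_sum_of_nonneg (fun k _ => hbnn k)]
      exact Finset.sum_congr rfl fun k _ => hint k
    rw [hsum]
    have hnpos : (0:ℝ) < n := by exact_mod_cast hn
    rw [mul_comm, ← div_eq_mul_inv, ENNReal.ofReal_div_of_pos hnpos,
      ENNReal.ofReal_natCast]
  have hflim : Filter.Tendsto
      (fun n : ℕ => ENNReal.ofReal ((n:ℝ)⁻¹ * ∑ k ∈ Finset.range n, b k))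
      atTop (nhds ((i:ℕ) : ℝ≥0∞)) := by
    have := (ENNReal.continuous_ofReal.tendsto _).comp hces
    rw [ENNReal.ofReal_natCast] at this
    exact this
  have hlimsup := hflim.limsup_eq
  rw [← hlimsup]
  refine Filter.limsup_congr ?_
  filter_upwards [Filter.eventually_ge_atTop 1] with n hn
  exact heq n hn
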